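/- Let K be a field of characteristic different from 2. Let U₁(K) be the set of points [t : z₀ : z₁ : z₂ : z₃] ∈ ℙ⁴(K) with z₀⁴ − z₁⁴ + z₂⁴ − z₃⁴ = 0, t ≠ 0 and z₀² + z₁² ≠ 0, and let U₂(K) be the set of points [Y₀ : Y₁ : Y₂ : Y₃ : X₀ : X₁ : X₂ : X₃] ∈ Z(K) with Y₀² + Y₁² ≠ 0 and X₃ ≠ 0. Then the map φ sending [t : z₀ : z₁ : z₂ : z₃] to [2z₀ : 2z₁ : 2z₂ : 2z₃ : (z₀² + z₁²)/t : (−z₂² + z₃²)/t : t(z₂² + z₃²)/(z₀² + z₁²) : t] is a well-defined bijection from U₁(K) onto U₂(K), with inverse sending [Y₀ : Y₁ : Y₂ : Y₃ : X₀ : X₁ : X₂ : X₃] to [X₃ : Y₀/2 : Y₁/2 : Y₂/2 : Y₃/2]. -/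

import Mathlib

/-- The tangent cone condition on coordinates `(t, z₀, z₁, z₂, z₃) = (v 0, …, v 4)`:
`z₀⁴ - z₁⁴ + z₂⁴ - z₃⁴ = 0`. -/
def ConeCond {K : Type*} [Field K] (v : Fin 5 → K) : Prop :=
  v 1 ^ 4 - v 2 ^ 4 + v 3 ^ 4 - v 4 ^ 4 = 0

/-- The defining condition of the Satake model `Z` in coordinates
`(Y₀, Y₁, Y₂, Y₃, X₀, X₁, X₂, X₃) = (w 0, …, w 7)`. -/
def SatakeCond {K : Type*} [Field K] (w : Fin 8 → K) : Prop :=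
  w 0 ^ 2 = 2 * (w 4 * w 7 + w 5 * w 6) ∧
  w 1 ^ 2 = 2 * (w 4 * w 7 - w 5 * w 6) ∧
  w 2 ^ 2 = 2 * (w 4 * w 6 - w 5 * w 7) ∧
  w 3 ^ 2 = 2 * (w 4 * w 6 + w 5 * w 7)

/-- Homogeneous coordinates of a point of `U₁`: a nonzero vector on the cone with
`t ≠ 0` and `z₀² + z₁² ≠ 0`. -/
def U1Cond {K : Type*} [Field K] (v : Fin 5 → K) : Prop :=
  v ≠ 0 ∧ ConeCond v ∧ v 0 ≠ 0 ∧ v 1 ^ 2 + v 2 ^ 2 ≠ 0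

/-- Homogeneous coordinates of a point of `U₂`: a nonzero vector on `Z` with
`Y₀² + Y₁² ≠ 0` and `X₃ ≠ 0`. -/
def U2Cond {K : Type*} [Field K] (w : Fin 8 → K) : Prop :=
  w ≠ 0 ∧ SatakeCond w ∧ w 0 ^ 2 + w 1 ^ 2 ≠ 0 ∧ w 7 ≠ 0

/-- The birational map `φ` of van Geemen–Nygaard, in homogeneous coordinates:
`[t : z₀ : z₁ : z₂ : z₃] ↦
 [2z₀ : 2z₁ : 2z₂ : 2z₃ : (z₀² + z₁²)/t : (-z₂² + z₃²)/t : t(z₂² + z₃²)/(z₀² + z₁²) : t]`. -/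
def phiVGN {K : Type*} [Field K] (v : Fin 5 → K) : Fin 8 → K :=
  ![2 * v 1, 2 * v 2, 2 * v 3, 2 * v 4,
    (v 1 ^ 2 + v 2 ^ 2) / v 0, (-(v 3 ^ 2) + v 4 ^ 2) / v 0,
    v 0 * (v 3 ^ 2 + v 4 ^ 2) / (v 1 ^ 2 + v 2 ^ 2), v 0]

/-- The inverse map: `[Y₀ : Y₁ : Y₂ : Y₃ : X₀ : X₁ : X₂ : X₃] ↦ [X₃ : Y₀/2 : Y₁/2 : Y₂/2 : Y₃/2]`. -/
def psiVGN {K : Type*} [Field K] (w : Fin 8 → K) : Fin 5 → K :=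
  ![w 7, w 0 / 2, w 1 / 2, w 2 / 2, w 3 / 2]

/-- Over any field `K` of characteristic `≠ 2`, the map `φ` is a well-defined bijection
`U₁(K) → U₂(K)` of projective point sets, with inverse `ψ`:  `φ` maps homogeneous coordinates
of points of `U₁` to homogeneous coordinates of points of `U₂`, `ψ` conversely, and the two
composites are the identity up to a nonzero scalar (i.e. projectively). -/
theorem phi_bijection (K : Type*) [Field K] (hK : ringChar K ≠ 2) :
    (∀ v : Fin 5 → K, U1Cond v →
        U2Cond (phiVGN v) ∧ ∃ c : K, c ≠ 0 ∧ psiVGN (phiVGN v) = c • v) ∧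
    (∀ w : Fin 8 → K, U2Cond w →
        U1Cond (psiVGN w) ∧ ∃ c : K, c ≠ 0 ∧ phiVGN (psiVGN w) = c • w) := by
  have h2 : (2:K) ≠ 0 := Ring.two_ne_zero hK
  have h4 : (4:K) ≠ 0 := by
    have h : (4:K) = 2 * 2 := by norm_num
    rw [h]; exact mul_ne_zero h2 h2
  constructor
  · rintro v ⟨hv, hc, ht, hz⟩
    have hc' : v 1 ^ 4 - v 2 ^ 4 + v 3 ^ 4 - v 4 ^ 4 = 0 := hc
    have e0 : phiVGN v 0 = 2 * v 1 := rfl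
    have e1 : phiVGN v 1 = 2 * v 2 := rfl
    have e2 : phiVGN v 2 = 2 * v 3 := rfl
    have e3 : phiVGN v 3 = 2 * v 4 := rfl
    have e4 : phiVGN v 4 = (v 1 ^ 2 + v 2 ^ 2) / v 0 := rfl
    have e5 : phiVGN v 5 = (-(v 3 ^ 2) + v 4 ^ 2) / v 0 := rfl
    have e6 : phiVGN v 6 = v 0 * (v 3 ^ 2 + v 4 ^ 2) / (v 1 ^ 2 + v 2 ^ 2) := rfl
    have e7 : phiVGN v 7 = v 0 := rfl
    refine ⟨⟨?_, ⟨?_, ?_, ?_, ?_⟩, ?_, ?_⟩, 1, one_ne_zero, ?_⟩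
    · intro h
      exact ht (by simpa [e7] using congrFun h 7)
    · rw [e0, e4, e5, e6, e7]; field_simp; linear_combination hc'
    · rw [e1, e4, e5, e6, e7]; field_simp; linear_combination (-1) * hc'
    · rw [e2, e4, e5, e6, e7]; field_simp; ring
    · rw [e3, e4, e5, e6, e7]; field_simp; ring
    · rw [e0, e1]
      intro h
      apply hz
      have h' : (4:K) * (v 1 ^ 2 + v 2 ^ 2) = 0 := by linear_combination h
      exact (mul_eq_zero.mp h').resolve_left h4
    · rw [e7]; exact ht
    · rw [one_smul]
      funext i
      fin_cases i
      · show v 0 = v 0; rfl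
      · show 2 * v 1 / 2 = v 1; field_simp
      · show 2 * v 2 / 2 = v 2; field_simp
      · show 2 * v 3 / 2 = v 3; field_simp
      · show 2 * v 4 / 2 = v 4; field_simp
  · rintro w ⟨hw, ⟨s0, s1, s2, s3⟩, hy, hx⟩
    have hw4 : w 4 ≠ 0 := by
      intro h
      apply hy
      rw [s0, s1, h]; ring
    have hsum : w 0 ^ 2 + w 1 ^ 2 = 4 * (w 4 * w 7) := by
      rw [s0, s1]; ring
    refine ⟨⟨?_, ?_, ?_, ?_⟩, 1, one_ne_zero, ?_⟩
    · intro h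
      exact hx (by simpa [psiVGN] using congrFun h 0)
    · show psiVGN w 1 ^ 4 - psiVGN w 2 ^ 4 + psiVGN w 3 ^ 4 - psiVGN w 4 ^ 4 = 0
      show (w 0 / 2) ^ 4 - (w 1 / 2) ^ 4 + (w 2 / 2) ^ 4 - (w 3 / 2) ^ 4 = 0
      field_simp
      linear_combination (w 0 ^ 2 + w 1 ^ 2 + 4 * w 5 * w 6) * s0
        - (w 0 ^ 2 + w 1 ^ 2 + 2 * w 5 * w 6 - 6 * w 5 * w 6) * s1
        + (w 2 ^ 2 + w 3 ^ 2 - 4 * w 5 * w 7) * s2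
        - (w 2 ^ 2 + w 3 ^ 2 - 2 * w 5 * w 7 + 6 * w 5 * w 7) * s3
    · show w 7 ≠ 0; exact hx
    · show (w 0 / 2) ^ 2 + (w 1 / 2) ^ 2 ≠ 0
      intro h
      apply hy
      have h' : w 0 ^ 2 + w 1 ^ 2 = 4 * ((w 0 / 2) ^ 2 + (w 1 / 2) ^ 2) := by
        field_simp; ring
      rw [h', h, mul_zero]
    · rw [one_smul]
      have hne : (w 0 / 2) ^ 2 + (w 1 / 2) ^ 2 ≠ 0 := by
        intro h
        apply hy
        have h' : w 0 ^ 2 + w 1 ^ 2 = 4 * ((w 0 / 2) ^ 2 + (w 1 / 2) ^ 2) := by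
          field_simp; ring
        rw [h', h, mul_zero]
      funext i
      fin_cases i
      · show 2 * (w 0 / 2) = w 0; field_simp
      · show 2 * (w 1 / 2) = w 1; field_simp
      · show 2 * (w 2 / 2) = w 2; field_simp
      · show 2 * (w 3 / 2) = w 3; field_simp
      · show ((w 0 / 2) ^ 2 + (w 1 / 2) ^ 2) / w 7 = w 4
        rw [div_eq_iff hx]
        field_simp
        linear_combination s0 + s1
      · show (-((w 2 / 2) ^ 2) + (w 3 / 2) ^ 2) / w 7 = w 5
        rw [div_eq_iff hx]
        field_simp
        linear_combination s3 - s2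
      · show w 7 * ((w 2 / 2) ^ 2 + (w 3 / 2) ^ 2) / ((w 0 / 2) ^ 2 + (w 1 / 2) ^ 2) = w 6
        rw [div_eq_iff hne]
        field_simp
        linear_combination w 7 * (s2 + s3) - w 6 * (s0 + s1)
      · show w 7 = w 7; rfl
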